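/- Let H be a digraph (a structure with one binary relation E) and let x ∈ H be a ∀-canon, meaning: for all y, E(x,y) implies ∀z E(z,y), and E(y,x) implies ∀z E(y,z). Then for every prenex sentence φ of positive equality-free first-order logic, H ⊨ φ if and only if H ⊨ φ[∀/x], where φ[∀/x] is obtained from φ by instantiating every universally quantified variable as x. -/
import Mathlib


/-- Quantifier-free positive equality-free formulas over the digraph signature,
with `n` free variables. -/
inductive QF : ℕ → Type
  | atom {n : ℕ} (i j : Fin n) : QF n
  | conj {n : ℕ} (φ ψ : QF n) : QF n
  | disj {n : ℕ} (φ ψ : QF n) : QF n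

/-- Prenex positive equality-free first-order formulas over the digraph signature. -/
inductive PFO : ℕ → Type
  | qf  {n : ℕ} (φ : QF n) : PFO n
  | ex  {n : ℕ} (φ : PFO (n + 1)) : PFO n
  | all {n : ℕ} (φ : PFO (n + 1)) : PFO n

def QF.eval {V : Type*} (E : V → V → Prop) : {n : ℕ} → QF n → (Fin n → V) → Prop
  | _, .atom i j, ρ => E (ρ i) (ρ j)
  | _, .conj φ ψ, ρ => φ.eval E ρ ∧ ψ.eval E ρ
  | _, .disj φ ψ, ρ => φ.eval E ρ ∨ ψ.eval E ρ

/-- Evaluation of a prenex formula, where `u = some x` means every universal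
variable is instantiated as `x` (instead of being genuinely universally
quantified), and `e = some y` means every existential variable is instantiated
as `y`. `none` means genuine quantification. -/
def PFO.eval {V : Type*} (E : V → V → Prop) (u e : Option V) :
    {n : ℕ} → PFO n → (Fin n → V) → Prop
  | _, .qf φ, ρ => φ.eval E ρ
  | _, .ex φ, ρ =>
      match e with
      | none => ∃ v, φ.eval E u e (Fin.snoc ρ v)
      | some y => φ.eval E u e (Fin.snoc ρ y)
  | _, .all φ, ρ =>
      match u with
      | none => ∀ v, φ.eval E u e (Fin.snoc ρ v)
      | some x => φ.eval E u e (Fin.snoc ρ x)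

/-- Satisfaction of a prenex sentence by the digraph `(V, E)`, with optional
instantiation of the universal (`u`) and existential (`e`) variables. -/
def PFO.Sat {V : Type*} (E : V → V → Prop) (u e : Option V) (φ : PFO 0) : Prop :=
  φ.eval E u e (fun i => i.elim0)

def EDom {V : Type*} (E : V → V → Prop) (a b : V) : Prop :=
  (∀ c, E a c → E b c) ∧ (∀ c, E c a → E c b)

lemma EDom.refl {V : Type*} (E : V → V → Prop) (a : V) : EDom E a a :=
  ⟨fun _ h => h, fun _ h => h⟩

lemma sub_snoc {V : Type*} (E : V → V → Prop) {n : ℕ} {ρ ρ' : Fin n → V}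
    (h : ∀ i, EDom E (ρ i) (ρ' i)) {a b : V} (hab : EDom E a b) :
    ∀ i : Fin (n + 1), EDom E ((Fin.snoc ρ a : Fin (n + 1) → V) i) ((Fin.snoc ρ' b : Fin (n + 1) → V) i) := by
  intro i
  induction i using Fin.lastCases with
  | last => simpa using hab
  | cast j => simpa using h j

lemma qf_mono {V : Type*} (E : V → V → Prop) :
    ∀ {n : ℕ} (φ : QF n) (ρ ρ' : Fin n → V), (∀ i, EDom E (ρ i) (ρ' i)) →
      φ.eval E ρ → φ.eval E ρ'
  | _, .atom i j, ρ, ρ', h, he => by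
      simp only [QF.eval] at he ⊢
      exact (h j).2 _ ((h i).1 _ he)
  | _, .conj φ ψ, ρ, ρ', h, he => by
      simp only [QF.eval] at he ⊢
      obtain ⟨h1, h2⟩ := he
      exact ⟨qf_mono E φ ρ ρ' h h1, qf_mono E ψ ρ ρ' h h2⟩
  | _, .disj φ ψ, ρ, ρ', h, he => by
      simp only [QF.eval] at he ⊢
      rcases he with h1 | h1
      · exact Or.inl (qf_mono E φ ρ ρ' h h1)
      · exact Or.inr (qf_mono E ψ ρ ρ' h h1)

lemma key {V : Type*} (E : V → V → Prop) (x : V)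
    (hx : ∀ y, (E x y → ∀ z, E z y) ∧ (E y x → ∀ z, E y z)) :
    ∀ {n : ℕ} (φ : PFO n) (ρ ρ' : Fin n → V), (∀ i, EDom E (ρ i) (ρ' i)) →
      φ.eval E (some x) none ρ → φ.eval E none none ρ'
  | _, .qf φ, ρ, ρ', h, he => qf_mono E φ ρ ρ' h he
  | _, .ex φ, ρ, ρ', h, he => by
      obtain ⟨v, hv⟩ := he
      exact ⟨v, key E x hx φ _ _ (sub_snoc E h (EDom.refl E v)) hv⟩
  | _, .all φ, ρ, ρ', h, he => by
      intro v
      have hxv : EDom E x v := ⟨fun c hc => (hx c).1 hc v, fun c hc => (hx c).2 hc v⟩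
      exact key E x hx φ _ _ (sub_snoc E h hxv) he

lemma fwd {V : Type*} (E : V → V → Prop) (x : V) :
    ∀ {n : ℕ} (φ : PFO n) (ρ : Fin n → V),
      φ.eval E none none ρ → φ.eval E (some x) none ρ
  | _, .qf φ, ρ, he => he
  | _, .ex φ, ρ, he => by
      obtain ⟨v, hv⟩ := he
      exact ⟨v, fwd E x φ _ hv⟩
  | _, .all φ, ρ, he => fwd E x φ _ (he x)

/-- if `x` is a ∀-canon of the digraph `H = (V, E)`, then a prenex
positive equality-free sentence holds in `H` iff it holds with every universal
variable instantiated as `x`. -/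
theorem stmt1 {V : Type*} (E : V → V → Prop) (x : V)
    (hx : ∀ y, (E x y → ∀ z, E z y) ∧ (E y x → ∀ z, E y z)) :
    ∀ φ : PFO 0, PFO.Sat E none none φ ↔ PFO.Sat E (some x) none φ := by
  intro φ
  exact ⟨fwd E x φ _, fun h => key E x hx φ _ _ (fun i => i.elim0) h⟩
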